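/- Let π be a two-stack sortable permutation and suppose D(π) = (π1, π2). Then either π = C1(π1, π2), or π = C2(π1, π2, i) for some integer i with 1 ≤ i ≤ slmax(π2). -/

import Mathlib

namespace TSP

theorem foldr_max_mem {α : Type} [LinearOrder α] (x : α) (l : List α) :
    l.foldr max x ∈ x :: l := by
  induction l with
  | nil => simp
  | cons a t ih =>
    simp only [List.foldr_cons]
    rcases max_choice a (t.foldr max x) with h | h <;> rw [h]
    · simp
    · rcases List.mem_cons.mp ih with h' | h'
      · rw [h']; simp
      · exact List.mem_cons.mpr (Or.inr (List.mem_cons.mpr (Or.inr h')))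

theorem length_takeWhile_lt {α : Type} [DecidableEq α] {m : α} {l : List α}
    (h : m ∈ l) : (l.takeWhile (· ≠ m)).length < l.length := by
  have hd : l.dropWhile (· ≠ m) ≠ [] := by
    intro hnil
    have := List.dropWhile_eq_nil_iff.mp hnil m h
    simp at this
  have hsum : (l.takeWhile (· ≠ m)).length + (l.dropWhile (· ≠ m)).length = l.length := by
    rw [← List.length_append, List.takeWhile_append_dropWhile]
  have : 0 < (l.dropWhile (· ≠ m)).length := List.length_pos_iff.mpr hd
  omega

theorem length_tail_dropWhile_lt {α : Type} [DecidableEq α] {m : α} {l : List α}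
    (h : l ≠ []) : ((l.dropWhile (· ≠ m)).tail).length < l.length := by
  have hsum : (l.takeWhile (· ≠ m)).length + (l.dropWhile (· ≠ m)).length = l.length := by
    rw [← List.length_append, List.takeWhile_append_dropWhile]
  have h2 : ((l.dropWhile (· ≠ m)).tail).length = (l.dropWhile (· ≠ m)).length - 1 :=
    List.length_tail
  have : 0 < l.length := List.length_pos_iff.mpr h
  omega

/-- The stack-sorting operator `S`: `S(ε) = ε`, and if `A` is nonempty with
largest element `m` and `A = A_L · (m) · A_R`, then `S(A) = S(A_L) · S(A_R) · (m)`. -/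
def S {α : Type} [LinearOrder α] : List α → List α
  | [] => []
  | x :: l =>
    let m := l.foldr max x
    S ((x :: l).takeWhile (· ≠ m)) ++ S (((x :: l).dropWhile (· ≠ m)).tail) ++ [m]
termination_by l => l.length
decreasing_by
  · exact length_takeWhile_lt (by simpa [List.foldr_attach] using foldr_max_mem x l)
  · exact length_tail_dropWhile_lt (by simp)

/-- The identity permutation `id_n = (1, 2, …, n)` as a list. -/
def idPerm (n : ℕ) : List ℕ := List.range' 1 n

/-- `l` is a permutation of `{1, …, n}` (viewed as a sequence). -/
def IsPermOf (n : ℕ) (l : List ℕ) : Prop := l.Perm (idPerm n)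

/-- `l` is a two-stack sortable permutation (of `{1, …, len l}`). -/
def Is2SS (l : List ℕ) : Prop := IsPermOf l.length l ∧ S (S l) = idPerm l.length

/-- `σ^{+k}`: add `k` to every entry. -/
def shift (k : ℕ) (l : List ℕ) : List ℕ := l.map (· + k)

/-- `σ^{+(k1,m,k2)}`: add `k1` to every entry strictly smaller than `m`, `k2` to the others. -/
def shift3 (k1 m k2 : ℕ) (l : List ℕ) : List ℕ :=
  l.map (fun a => if a < m then a + k1 else a + k2)

/-- Standardization `P(A)`: the permutation of `{1,…,len A}` in the same relative order. -/
def stand (l : List ℕ) : List ℕ := l.map (fun a => (l.filter (fun b => b ≤ a)).length)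

/-- Avoidance of the pattern 231: no positions `i < j < k` with `l(k) < l(i) < l(j)`. -/
def Avoids231 (l : List ℕ) : Prop :=
  ¬ ∃ i j k, i < j ∧ j < k ∧ k < l.length ∧
      l.getD k 0 < l.getD i 0 ∧ l.getD i 0 < l.getD j 0

/-- The list of values of the left-to-right maxima of `l`, in order. -/
def lrMaxima (l : List ℕ) : List ℕ :=
  ((List.range l.length).filter
    (fun i => (l.take i).all (fun b => b < l.getD i 0))).map (fun i => l.getD i 0)

/-- `lmax`: the number of left-to-right maxima. -/
def lmax (l : List ℕ) : ℕ :=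
  (List.range l.length).countP (fun i => (l.take i).all (fun b => b < l.getD i 0))

/-- `rmax`: the number of right-to-left maxima. -/
def rmax (l : List ℕ) : ℕ :=
  (List.range l.length).countP (fun i => (l.drop (i+1)).all (fun b => b < l.getD i 0))

/-- `asc`: the number of ascents. -/
def asc (l : List ℕ) : ℕ :=
  (List.range (l.length - 1)).countP (fun i => l.getD i 0 < l.getD (i+1) 0)

/-- `des`: the number of descents. -/
def des (l : List ℕ) : ℕ :=
  (List.range (l.length - 1)).countP (fun i => l.getD (i+1) 0 < l.getD i 0)

/-- `slmax(π)`: the number of left-to-right maxima of `S(π)`. -/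
def slmax (l : List ℕ) : ℕ := lmax (S l)

/-- `sldes(π)`: the number of entries `a` that precede `a - 1` in `S(π)`. -/
def sldes (l : List ℕ) : ℕ :=
  (List.range (S l).length).countP
    (fun i => ((S l).drop (i+1)).any (fun b => b + 1 = (S l).getD i 0))

/-- The construction `C1(π1, π2) = π1 · (k+ℓ+1) · π2^{+k}`. -/
def C1 (p1 p2 : List ℕ) : List ℕ :=
  p1 ++ (p1.length + p2.length + 1) :: shift p1.length p2

/-- The `i`-th left-to-right maximum `a_i` of `S(π2)` (1-indexed). -/
def lrm (p2 : List ℕ) (i : ℕ) : ℕ := (lrMaxima (S p2)).getD (i - 1) 0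

/-- The construction `C2(π1, π2, i) = π1^{+(0,k,a_i)} · (k+ℓ+1) · π2^{+(k-1,a_i+1,k)}`. -/
def C2 (p1 p2 : List ℕ) (i : ℕ) : List ℕ :=
  shift3 0 p1.length (lrm p2 i) p1 ++
    (p1.length + p2.length + 1) :: shift3 (p1.length - 1) (lrm p2 i + 1) p1.length p2

/-- The decomposition `D(π) = (P(π_ℓ), P(π_r))`, where `π = π_ℓ · (n) · π_r`
with `n` the largest entry of `π`. -/
def D (l : List ℕ) : List ℕ × List ℕ :=
  match l with
  | [] => ([], [])
  | x :: t =>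
    let m := t.foldr max x
    (stand ((x :: t).takeWhile (· ≠ m)), stand (((x :: t).dropWhile (· ≠ m)).tail))

-- unfold lemma
theorem S_cons {α : Type} [LinearOrder α] (x : α) (l : List α) :
    S (x :: l) = S ((x :: l).takeWhile (· ≠ l.foldr max x))
      ++ S (((x :: l).dropWhile (· ≠ l.foldr max x)).tail) ++ [l.foldr max x] := by
  rw [S]

theorem le_foldr_max {α : Type} [LinearOrder α] (x : α) (l : List α) :
    ∀ y ∈ x :: l, y ≤ l.foldr max x := by
  induction l generalizing x with
  | nil => simp
  | cons a t ih =>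
    intro y hy
    simp only [List.foldr_cons]
    rcases List.mem_cons.mp hy with h | h
    · subst h
      exact le_trans (ih y y (List.mem_cons_self)) (le_max_right _ _)
    · rcases List.mem_cons.mp h with h' | h'
      · subst h'; exact le_max_left _ _
      · exact le_trans (ih x y (List.mem_cons.mpr (Or.inr h'))) (le_max_right _ _)

theorem foldr_max_eq {α : Type} [LinearOrder α] {x m : α} {l : List α}
    (hm : m ∈ x :: l) (hub : ∀ y ∈ x :: l, y ≤ m) : l.foldr max x = m :=
  le_antisymm (by
    rcases List.mem_cons.mp (foldr_max_mem x l) with h | h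
    · rw [h]; exact hub x (by simp)
    · exact hub _ (by simp [h]))
    (le_foldr_max x l m hm)

theorem takeWhile_append_of_all {α : Type} {p : α → Bool} {A : List α} (B : List α)
    (hA : ∀ y ∈ A, p y = true) : (A ++ B).takeWhile p = A ++ B.takeWhile p := by
  induction A with
  | nil => simp
  | cons a t ih =>
    simp only [List.cons_append, List.takeWhile_cons, hA a (by simp), if_true]
    rw [ih (fun y hy => hA y (by simp [hy]))]

theorem dropWhile_append_of_all {α : Type} {p : α → Bool} {A : List α} (B : List α)
    (hA : ∀ y ∈ A, p y = true) : (A ++ B).dropWhile p = B.dropWhile p := by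
  induction A with
  | nil => simp
  | cons a t ih =>
    simp only [List.cons_append, List.dropWhile_cons, hA a (by simp)]
    exact ih (fun y hy => hA y (by simp [hy]))

/-- Key decomposition lemma for `S`. -/
theorem S_decomp {A B : List ℕ} {m : ℕ} (hA : ∀ y ∈ A, y < m) (hB : ∀ y ∈ B, y < m) :
    S (A ++ m :: B) = S A ++ S B ++ [m] := by
  have hall : ∀ y ∈ A ++ m :: B, y ≤ m := by
    intro y hy
    rcases List.mem_append.mp hy with h | h
    · exact le_of_lt (hA y h)
    · rcases List.mem_cons.mp h with h | h
      · exact le_of_eq h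
      · exact le_of_lt (hB y h)
  have hAne : ∀ y ∈ A, (y ≠ m : Bool) = true := by
    intro y hy; simp [Nat.ne_of_lt (hA y hy)]
  have hmem : m ∈ A ++ m :: B := by simp
  obtain ⟨x, t, hxt⟩ : ∃ x t, A ++ m :: B = x :: t := by
    cases hc : A ++ m :: B with
    | nil => simp at hc
    | cons x t => exact ⟨x, t, rfl⟩
  rw [hxt, S_cons]
  have hfold : t.foldr max x = m := foldr_max_eq (hxt ▸ hmem) (hxt ▸ hall)
  rw [hfold, ← hxt]
  rw [takeWhile_append_of_all _ hAne, dropWhile_append_of_all _ hAne]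
  simp [List.takeWhile_cons, List.dropWhile_cons]

theorem dropWhile_ne_cons {α : Type} [DecidableEq α] {m : α} {l : List α} (hm : m ∈ l) :
    l.dropWhile (· ≠ m) = m :: (l.dropWhile (· ≠ m)).tail := by
  have hne : l.dropWhile (· ≠ m) ≠ [] := by
    intro hnil
    have := List.dropWhile_eq_nil_iff.mp hnil m hm
    simp at this
  have hhead : (l.dropWhile (· ≠ m)).head hne = m := by
    have := List.head_dropWhile_not (fun y => (y ≠ m : Bool)) hne
    simpa using this
  conv_lhs => rw [← List.cons_head_tail hne, hhead]

theorem decomp_eq {α : Type} [DecidableEq α] {m : α} {l : List α} (hm : m ∈ l) :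
    l = l.takeWhile (· ≠ m) ++ m :: (l.dropWhile (· ≠ m)).tail := by
  conv_lhs => rw [← List.takeWhile_append_dropWhile (p := (· ≠ m)) (l := l)]
  rw [← dropWhile_ne_cons hm]

theorem S_perm {α : Type} [LinearOrder α] (l : List α) : (S l).Perm l := by
  match l with
  | [] => simp [S]
  | x :: t =>
    rw [S_cons]
    set m := t.foldr max x with hm
    have hmem : m ∈ x :: t := foldr_max_mem x t
    have h1 : (S ((x :: t).takeWhile (· ≠ m))).Perm ((x :: t).takeWhile (· ≠ m)) :=
      S_perm _
    have h2 : (S (((x :: t).dropWhile (· ≠ m)).tail)).Perm (((x :: t).dropWhile (· ≠ m)).tail) :=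
      S_perm _
    have step1 : (S ((x :: t).takeWhile (· ≠ m)) ++ S (((x :: t).dropWhile (· ≠ m)).tail)
        ++ [m]).Perm
        (((x :: t).takeWhile (· ≠ m)) ++ (((x :: t).dropWhile (· ≠ m)).tail) ++ [m]) :=
      (h1.append h2).append (List.Perm.refl _)
    have step2 : (((x :: t).takeWhile (· ≠ m) ++ ((x :: t).dropWhile (· ≠ m)).tail)
        ++ [m]).Perm (x :: t) := by
      rw [List.append_assoc]
      refine ((List.Perm.refl _).append List.perm_append_comm).trans ?_
      rw [List.singleton_append]
      exact (List.Perm.refl _).trans (by rw [← decomp_eq hmem])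
    exact step1.trans step2
termination_by l.length
decreasing_by
  · exact length_takeWhile_lt hmem
  · exact length_tail_dropWhile_lt (by simp)

theorem S_length {α : Type} [LinearOrder α] (l : List α) : (S l).length = l.length :=
  (S_perm l).length_eq

theorem S_mem {α : Type} [LinearOrder α] {l : List α} {a : α} : a ∈ S l ↔ a ∈ l :=
  (S_perm l).mem_iff

theorem foldr_max_map {f : ℕ → ℕ} (hf : Monotone f) (x : ℕ) (l : List ℕ) :
    (l.map f).foldr max (f x) = f (l.foldr max x) := by
  induction l with
  | nil => simp
  | cons a t ih => simp [ih, hf.map_max]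

theorem S_map {f : ℕ → ℕ} (hf : StrictMono f) (l : List ℕ) :
    S (l.map f) = (S l).map f := by
  match l with
  | [] => simp [S]
  | x :: t =>
    have hmem : t.foldr max x ∈ x :: t := foldr_max_mem x t
    set m := t.foldr max x with hm
    have hpred : (fun y => decide (y ≠ f m)) ∘ f = fun y => decide (y ≠ m) := by
      funext y
      simp only [Function.comp_apply, ne_eq, decide_eq_decide, not_iff_not]
      exact hf.injective.eq_iff
    have e1 : (x :: t).map f = f x :: t.map f := by simp
    rw [e1, S_cons, ← e1, foldr_max_map hf.monotone]
    rw [List.takeWhile_map, List.dropWhile_map, ← hm, hpred]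
    rw [← List.map_tail]
    rw [S_map hf ((x :: t).takeWhile (· ≠ m)), S_map hf (((x :: t).dropWhile (· ≠ m)).tail)]
    rw [S_cons, ← hm]
    simp
termination_by l.length
decreasing_by
  · exact length_takeWhile_lt hmem
  · exact length_tail_dropWhile_lt (by simp)

open List in
theorem pattern231 {l : List ℕ} {a b c : ℕ} (hsub : [b, c, a] <+ l)
    (hab : a < b) (hbc : b < c) : [b, a] <+ S l := by
  match l with
  | [] => simp at hsub
  | x :: t =>
    have hmem : t.foldr max x ∈ x :: t := foldr_max_mem x t
    set m := t.foldr max x with hm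
    have hub : ∀ y ∈ x :: t, y ≤ m := le_foldr_max x t
    set T := (x :: t).takeWhile (· ≠ m) with hT
    set R := ((x :: t).dropWhile (· ≠ m)).tail with hR
    have hTsub : T <+ x :: t := List.takeWhile_sublist _
    have hRsub : R <+ x :: t := (List.tail_sublist _).trans (List.dropWhile_sublist _)
    have hSl : S (x :: t) = S T ++ S R ++ [m] := S_cons x t
    have hldec : x :: t = T ++ m :: R := decomp_eq hmem
    rw [hldec] at hsub
    rw [hSl]
    -- helper to embed [b, a] when b ∈ T, a ∈ R
    have emb : b ∈ T → a ∈ R → [b, a] <+ S T ++ S R ++ [m] := by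
      intro hb ha
      have h1 : [b] <+ S T := List.singleton_sublist.mpr (S_mem.mpr hb)
      have h2 : [a] <+ S R := List.singleton_sublist.mpr (S_mem.mpr ha)
      exact (h1.append h2).trans (List.sublist_append_left _ _)
    obtain ⟨l₁, l₂, heq, h₁, h₂⟩ := List.sublist_append_iff.mp hsub
    match l₁, heq with
    | [], heq =>
      -- [b,c,a] <+ m :: R
      have hl₂ : l₂ = [b, c, a] := by simpa using heq.symm
      rw [hl₂] at h₂
      rcases List.sublist_cons_iff.mp h₂ with h | ⟨r, hr, hrsub⟩
      · -- all in R
        have ih : [b, a] <+ S R := pattern231 h hab hbc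
        exact (ih.trans (List.sublist_append_right _ _)).trans (List.sublist_append_left _ _)
      · -- b = m, impossible
        obtain ⟨hbm, hrc⟩ : b = m ∧ [c, a] = r := by simpa using hr
        have hcR : c ∈ R := hrsub.mem (by rw [← hrc]; simp)
        have := hub c (hRsub.mem hcR)
        omega
    | [b'], heq =>
      obtain ⟨hb, hl₂⟩ : b = b' ∧ [c, a] = l₂ := by simpa using heq
      subst hb; subst hl₂
      have hbT : b ∈ T := h₁.mem (by simp)
      rcases List.sublist_cons_iff.mp h₂ with h | ⟨r, hr, hrsub⟩
      · exact emb hbT (h.mem (by simp))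
      · obtain ⟨hcm, hra⟩ : c = m ∧ [a] = r := by simpa using hr
        exact emb hbT (hrsub.mem (by rw [← hra]; simp))
    | [b', c'], heq =>
      obtain ⟨hb, hc, hl₂⟩ : b = b' ∧ c = c' ∧ [a] = l₂ := by simpa using heq
      subst hb; subst hc; subst hl₂
      have hbT : b ∈ T := h₁.mem (by simp)
      rcases List.sublist_cons_iff.mp h₂ with h | ⟨r, hr, hrsub⟩
      · exact emb hbT (h.mem (by simp))
      · -- a = m, impossible since b ∈ T ⊆ l, b ≤ m = a < b
        have ham : a = m := by injection hr
        have := hub b (hTsub.mem hbT)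
        omega
    | b' :: c' :: a' :: rest, heq =>
      obtain ⟨hb, hc, ha, hrest, hl₂⟩ :
          b = b' ∧ c = c' ∧ a = a' ∧ rest = [] ∧ l₂ = [] := by simpa using heq
      subst hb; subst hc; subst ha; subst hrest
      have ih : [b, a] <+ S T := pattern231 h₁ hab hbc
      exact (ih.trans (List.sublist_append_left _ _)).trans (List.sublist_append_left _ _)
termination_by l.length
decreasing_by
  · exact length_tail_dropWhile_lt (by simp)
  · exact length_takeWhile_lt (foldr_max_mem _ _)


-- no 231 pattern in a list whose image under S is the identity
open List in
theorem no_pattern {σ : List ℕ} {n : ℕ} (h : S σ = idPerm n) {a b c : ℕ}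
    (hsub : [b, c, a] <+ σ) (hab : a < b) (hbc : b < c) : False := by
  have h2 : [b, a] <+ S σ := pattern231 hsub hab hbc
  rw [h] at h2
  have hp : List.Pairwise (· < ·) (idPerm n) := List.pairwise_lt_range' (s := 1) (n := n)
  have hpw := List.Pairwise.sublist h2 hp
  have hba : b < a := List.rel_of_pairwise_cons hpw (by simp)
  omega

theorem lrMaxima_map {f : ℕ → ℕ} (hf : StrictMono f) (l : List ℕ) :
    lrMaxima (l.map f) = (lrMaxima l).map f := by
  unfold lrMaxima
  rw [List.length_map]
  have hfil : (List.range l.length).filter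
      (fun i => ((l.map f).take i).all (fun b => b < (l.map f).getD i 0)) =
      (List.range l.length).filter
      (fun i => (l.take i).all (fun b => b < l.getD i 0)) := by
    apply List.filter_congr
    intro i hi
    have hilt : i < l.length := List.mem_range.mp hi
    have hgd : (l.map f).getD i 0 = f (l.getD i 0) := by
      rw [List.getD_eq_getElem _ _ (by simpa using hilt), List.getD_eq_getElem _ _ hilt]
      simp
    rw [hgd, ← List.map_take, List.all_map]
    congr 1
    funext b
    simp [hf.lt_iff_lt]
  rw [hfil]
  rw [List.map_map]
  apply List.map_congr_left
  intro i hi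
  have hilt : i < l.length := List.mem_range.mp (List.mem_of_mem_filter hi)
  simp only [Function.comp_apply]
  rw [List.getD_eq_getElem _ _ (by simpa using hilt), List.getD_eq_getElem _ _ hilt]
  simp

theorem lmax_eq_length_lrMaxima (l : List ℕ) : lmax l = (lrMaxima l).length := by
  rw [lmax, lrMaxima, List.length_map, List.countP_eq_length_filter]

theorem mem_lrMaxima_of {l : List ℕ} {q : ℕ} (hq : q < l.length)
    (hall : ∀ u ∈ l.take q, u < l.getD q 0) : l.getD q 0 ∈ lrMaxima l := by
  rw [lrMaxima]
  apply List.mem_map.mpr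
  refine ⟨q, List.mem_filter.mpr ⟨List.mem_range.mpr hq, ?_⟩, rfl⟩
  rw [List.all_eq_true]
  intro u hu
  simpa using hall u hu

theorem range'_split (s m k : ℕ) :
    List.range' s (m + k) = List.range' s m ++ List.range' (s + m) k := by
  have := List.range'_append (s := s) (m := m) (n := k) (step := 1)
  simp only [one_mul] at this
  rw [← this]

theorem filter_le_range' (w s len : ℕ) :
    ((List.range' s len).filter (fun b => b ≤ w)).length = min (w + 1 - s) len := by
  induction len generalizing s with
  | zero => simp
  | succ n ih =>
    rw [List.range'_succ, List.filter_cons]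
    by_cases h : s ≤ w
    · have hd : (decide (s ≤ w)) = true := by simp [h]
      simp only [hd, if_true, List.length_cons, ih (s+1)]
      omega
    · have hd : (decide (s ≤ w)) = false := by simp [h]
      simp only [hd, Bool.false_eq_true, if_false, ih (s+1)]
      omega

theorem not_mem_take_indexOf {α : Type} [DecidableEq α] (l : List α) (w : α) :
    w ∉ l.take (l.idxOf w) := by
  induction l with
  | nil => simp
  | cons x r ih =>
    by_cases hx : x = w
    · subst hx; simp [List.idxOf_cons_self]
    · rw [List.idxOf_cons_ne _ hx]
      simp only [Nat.succ_eq_add_one, List.take_succ_cons, List.mem_cons]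
      rintro (h | h)
      · exact hx h.symm
      · exact ih h

theorem mem_le_of_perm_range' {l : List ℕ} {s len : ℕ}
    (hp : l.Perm (List.range' s len)) {y : ℕ} (hy : y ∈ l) : s ≤ y ∧ y < s + len :=
  List.mem_range'_1.mp (hp.mem_iff.mp hy)

theorem count_case1 {A B : List ℕ} {k ℓ : ℕ} (hk : A.length = k) (hl : B.length = ℓ)
    (hperm : (A ++ B).Perm (List.range' 1 (k + ℓ)))
    (hsep : ∀ y ∈ A, ∀ z ∈ B, y < z) :
    A.Perm (List.range' 1 k) ∧ B.Perm (List.range' (1 + k) ℓ) := by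
  have hnd : (A ++ B).Nodup := hperm.nodup_iff.mpr List.nodup_range'
  obtain ⟨hndA, hndB, hdisj⟩ := List.nodup_append'.mp hnd
  have hmemA : ∀ y ∈ A, 1 ≤ y ∧ y < 1 + (k + ℓ) := fun y hy =>
    mem_le_of_perm_range' hperm (List.mem_append.mpr (Or.inl hy))
  have hsubA : List.range' 1 k ⊆ A := by
    intro c hc
    obtain ⟨hc1, hc2⟩ := List.mem_range'_1.mp hc
    have hcAB : c ∈ A ++ B := hperm.mem_iff.mpr (List.mem_range'_1.mpr ⟨hc1, by omega⟩)
    rcases List.mem_append.mp hcAB with h | h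
    · exact h
    · exfalso
      have hAsub : A ⊆ List.range' 1 (c - 1) := by
        intro y hy
        have h1 := (hmemA y hy).1
        have h2 := hsep y hy c h
        exact List.mem_range'_1.mpr ⟨h1, by omega⟩
      have := (hndA.subperm hAsub).length_le
      rw [hk, List.length_range'] at this
      omega
  have hA : A.Perm (List.range' 1 k) := by
    refine (((List.nodup_range' (s := 1) (n := k)).subperm hsubA).perm_of_length_le ?_).symm
    rw [hk, List.length_range']
  have hsplit : List.range' 1 (k + ℓ) = List.range' 1 k ++ List.range' (1 + k) ℓ :=
    range'_split 1 k ℓ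
  have hB : (A ++ B).Perm (A ++ List.range' (1 + k) ℓ) := by
    rw [hsplit] at hperm
    exact hperm.trans (((List.perm_append_right_iff _).mpr hA.symm))
  exact ⟨hA, (List.perm_append_left_iff A).mp hB⟩

theorem count_case2 {A B : List ℕ} {k ℓ v : ℕ} (hk : A.length = k) (hl : B.length = ℓ)
    (hperm : (A ++ B).Perm (List.range' 1 (k + ℓ)))
    (hv : v ∈ A) (hub : ∀ y ∈ A, y ≤ v)
    (hsep : ∀ y ∈ A, y ≠ v → ∀ z ∈ B, y < z) (hex : ∃ z ∈ B, z < v) :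
    k + 1 ≤ v ∧ v ≤ k + ℓ ∧ A.Perm (List.range' 1 (k - 1) ++ [v]) ∧
      B.Perm (List.range' k (v - k) ++ List.range' (v + 1) (k + ℓ - v)) := by
  have hnd : (A ++ B).Nodup := hperm.nodup_iff.mpr List.nodup_range'
  obtain ⟨hndA, hndB, hdisj⟩ := List.nodup_append'.mp hnd
  have hmemA : ∀ y ∈ A, 1 ≤ y ∧ y < 1 + (k + ℓ) := fun y hy =>
    mem_le_of_perm_range' hperm (List.mem_append.mpr (Or.inl hy))
  have hmemB : ∀ y ∈ B, 1 ≤ y ∧ y < 1 + (k + ℓ) := fun y hy =>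
    mem_le_of_perm_range' hperm (List.mem_append.mpr (Or.inr hy))
  have hk1 : 1 ≤ k := by
    have := hv
    cases A with
    | nil => simp at this
    | cons a t => simp at hk; omega
  have hvrange := hmemA v hv
  -- v ≥ k + 1
  have hvk : k + 1 ≤ v := by
    by_contra hvk
    -- then A ⊆ range' 1 k ; in fact all elements of A are ≤ v ≤ k
    have hAsub : A ⊆ List.range' 1 k := by
      intro y hy
      exact List.mem_range'_1.mpr ⟨(hmemA y hy).1, by have := hub y hy; omega⟩
    have hA : A.Perm (List.range' 1 k) :=
      ((hndA.subperm hAsub).perm_of_length_le (by rw [hk, List.length_range'])).symm.symm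
    obtain ⟨z, hzB, hzv⟩ := hex
    have hzA : z ∈ A := by
      apply hA.mem_iff.mpr
      exact List.mem_range'_1.mpr ⟨(hmemB z hzB).1, by have := hub v hv; omega⟩
    exact hdisj hzA hzB
  have hsubA : (List.range' 1 (k - 1) ++ [v]) ⊆ A := by
    intro c hc
    rcases List.mem_append.mp hc with hc | hc
    · obtain ⟨hc1, hc2⟩ := List.mem_range'_1.mp hc
      have hcAB : c ∈ A ++ B := hperm.mem_iff.mpr (List.mem_range'_1.mpr ⟨hc1, by omega⟩)
      rcases List.mem_append.mp hcAB with h | h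
      · exact h
      · exfalso
        have hAsub : A ⊆ List.range' 1 (c - 1) ++ [v] := by
          intro y hy
          by_cases hyv : y = v
          · subst hyv; exact List.mem_append.mpr (Or.inr (by simp))
          · exact List.mem_append.mpr (Or.inl
              (List.mem_range'_1.mpr ⟨(hmemA y hy).1, by have := hsep y hy hyv c h; omega⟩))
        have := (hndA.subperm hAsub).length_le
        rw [hk] at this
        simp [List.length_range'] at this
        omega
    · simp at hc
      subst hc; exact hv
  have hndE : (List.range' 1 (k - 1) ++ [v]).Nodup := by
    rw [List.nodup_append']
    refine ⟨List.nodup_range', List.nodup_singleton v, ?_⟩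
    intro y hy hy2
    simp at hy2
    subst hy2
    have := List.mem_range'_1.mp hy
    omega
  have hA : A.Perm (List.range' 1 (k - 1) ++ [v]) := by
    refine ((hndE.subperm hsubA).perm_of_length_le ?_).symm
    rw [hk]
    simp [List.length_range']
    omega
  refine ⟨hvk, by omega, hA, ?_⟩
  -- now determine B by cancellation
  have e3 : List.range' 1 (v - 1) = List.range' 1 (k - 1) ++ List.range' k (v - k) := by
    have h := range'_split 1 (k - 1) (v - k)
    have h2 : 1 + (k - 1) = k := by omega
    rw [h2] at h
    rw [← h]
    congr 1
    omega
  have e2 : List.range' 1 v = List.range' 1 (v - 1) ++ [v] := by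
    have h := range'_split 1 (v - 1) 1
    have h2 : 1 + (v - 1) = v := by omega
    rw [h2, List.range'_one] at h
    rw [← h]
    congr 1
    omega
  have e1 : List.range' 1 (k + ℓ) = List.range' 1 v ++ List.range' (v + 1) (k + ℓ - v) := by
    have h := range'_split 1 v (k + ℓ - v)
    have h2 : 1 + v = v + 1 := by omega
    rw [h2] at h
    rw [← h]
    congr 1
    omega
  have hsplit : (List.range' 1 (k + ℓ)).Perm ((List.range' 1 (k - 1) ++ [v]) ++
      (List.range' k (v - k) ++ List.range' (v + 1) (k + ℓ - v))) := by
    rw [e1, e2, e3]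
    rw [List.append_assoc (List.range' 1 (k - 1)) (List.range' k (v - k)) [v]]
    refine (((List.Perm.refl _).append List.perm_append_comm).append (List.Perm.refl _)).trans ?_
    apply List.Perm.of_eq
    simp [List.append_assoc]
  have hfull : (A ++ B).Perm (A ++ (List.range' k (v - k) ++ List.range' (v + 1) (k + ℓ - v))) := by
    refine (hperm.trans hsplit).trans ?_
    exact (List.perm_append_right_iff _).mpr hA.symm
  exact (List.perm_append_left_iff A).mp hfull

theorem map_eq_self {A : List ℕ} {f : ℕ → ℕ} (h : ∀ y ∈ A, f y = y) : A.map f = A :=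
  (List.map_congr_left (g := id) h).trans (List.map_id A)

theorem filter_le_perm {A E : List ℕ} (hp : A.Perm E) (y : ℕ) :
    (A.filter (fun b => b ≤ y)).length = (E.filter (fun b => b ≤ y)).length := by
  rw [← List.countP_eq_length_filter, ← List.countP_eq_length_filter]
  exact hp.countP_eq _

theorem stand_length (l : List ℕ) : (stand l).length = l.length := by
  simp [stand]

theorem recon_case1A {A : List ℕ} (hA : A.Perm (List.range' 1 A.length)) :
    stand A = A := by
  rw [stand]
  apply map_eq_self
  intro y hy
  have hy' := mem_le_of_perm_range' hA hy
  rw [filter_le_perm hA, filter_le_range']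
  omega

theorem recon_case1B {B : List ℕ} {k : ℕ} (hB : B.Perm (List.range' (1 + k) B.length)) :
    shift k (stand B) = B := by
  rw [stand, shift, List.map_map]
  apply map_eq_self
  intro y hy
  have hy' := mem_le_of_perm_range' hB hy
  simp only [Function.comp_apply]
  rw [filter_le_perm hB, filter_le_range']
  omega

theorem recon_case2A {A : List ℕ} {v : ℕ} (hvk : A.length + 1 ≤ v)
    (hA : A.Perm (List.range' 1 (A.length - 1) ++ [v])) :
    shift3 0 A.length (v - A.length) (stand A) = A := by
  have hk1 : 1 ≤ A.length := by
    have := hA.length_eq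
    simp [List.length_range'] at this
    omega
  rw [stand, shift3, List.map_map]
  apply map_eq_self
  intro y hy
  simp only [Function.comp_apply]
  have heq : (A.filter (fun b => b ≤ y)).length
      = min (y + 1 - 1) (A.length - 1) + (if v ≤ y then 1 else 0) := by
    rw [filter_le_perm hA, List.filter_append, List.length_append, filter_le_range']
    congr 1
    by_cases h : v ≤ y <;> simp [h]
  rcases List.mem_append.mp (hA.mem_iff.mp hy) with h1 | h1
  · have hb := List.mem_range'_1.mp h1
    have h2 : ¬ v ≤ y := by omega
    rw [heq, if_neg h2]
    have h3 : min (y + 1 - 1) (A.length - 1) + 0 = y := by omega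
    rw [h3, if_pos (by omega : y < A.length)]
  · simp at h1
    subst h1
    rw [heq, if_pos (le_refl y)]
    have h3 : min (y + 1 - 1) (A.length - 1) + 1 = A.length := by omega
    rw [h3, if_neg (by omega)]
    omega

theorem recon_case2B {B : List ℕ} {k v : ℕ} (hk1 : 1 ≤ k) (hvk : k + 1 ≤ v)
    (hvkl : v ≤ k + B.length)
    (hB : B.Perm (List.range' k (v - k) ++ List.range' (v + 1) (k + B.length - v))) :
    shift3 (k - 1) ((v - k) + 1) k (stand B) = B := by
  rw [stand, shift3, List.map_map]
  apply map_eq_self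
  intro y hy
  simp only [Function.comp_apply]
  have heq : (B.filter (fun b => b ≤ y)).length
      = min (y + 1 - k) (v - k) + min (y + 1 - (v + 1)) (k + B.length - v) := by
    rw [filter_le_perm hB, List.filter_append, List.length_append, filter_le_range',
      filter_le_range']
  rcases List.mem_append.mp (hB.mem_iff.mp hy) with h1 | h1
  · have hb := List.mem_range'_1.mp h1
    have h3 : min (y + 1 - k) (v - k) + min (y + 1 - (v + 1)) (k + B.length - v)
        = y + 1 - k := by omega
    rw [heq, h3, if_pos (by omega)]
    omega
  · have hb := List.mem_range'_1.mp h1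
    have h3 : min (y + 1 - k) (v - k) + min (y + 1 - (v + 1)) (k + B.length - v)
        = y - k := by omega
    rw [heq, h3, if_neg (by omega)]
    omega


open List in
/-- If `π` is a two-stack sortable permutation with `D(π) = (π1, π2)`, then
either `π = C1(π1, π2)`, or `π = C2(π1, π2, i)` for some `1 ≤ i ≤ slmax(π2)`. -/
theorem D_inverse (π : List ℕ) (hne : π ≠ []) (h : Is2SS π)
    (π1 π2 : List ℕ) (hD : D π = (π1, π2)) :
    π = C1 π1 π2 ∨ ∃ i, 1 ≤ i ∧ i ≤ slmax π2 ∧ π = C2 π1 π2 i := by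
  obtain ⟨hperm, hSS⟩ := h
  cases π with
  | nil => exact absurd rfl hne
  | cons x t =>
  clear hne
  rw [IsPermOf, idPerm] at hperm
  rw [idPerm] at hSS
  set n := (x :: t).length with hn
  set m := t.foldr max x with hm
  set A := (x :: t).takeWhile (· ≠ m) with hAdef
  set B := ((x :: t).dropWhile (· ≠ m)).tail with hBdef
  have hD' : π1 = stand A ∧ π2 = stand B := by
    rw [D] at hD
    exact ⟨congrArg Prod.fst hD |>.symm, congrArg Prod.snd hD |>.symm⟩
  obtain ⟨hπ1, hπ2⟩ := hD'
  have hmem : m ∈ x :: t := foldr_max_mem x t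
  have hub : ∀ y ∈ x :: t, y ≤ m := le_foldr_max x t
  have hdec : x :: t = A ++ m :: B := decomp_eq hmem
  have hnodup : (x :: t).Nodup := hperm.nodup_iff.mpr List.nodup_range'
  have hn1 : 1 ≤ n := by simp [hn]
  have hnm : n ∈ x :: t := hperm.mem_iff.mpr (List.mem_range'_1.mpr ⟨hn1, by omega⟩)
  have hub' : ∀ y ∈ x :: t, y ≤ n := by
    intro y hy
    have := List.mem_range'_1.mp (hperm.mem_iff.mp hy)
    omega
  have hmn : m = n := foldr_max_eq hnm hub'
  have hn' : n = t.length + 1 := by rw [hn]; simp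
  have hlen : n = A.length + 1 + B.length := by
    have h5 := congrArg List.length hdec
    simp only [List.length_append, List.length_cons] at h5
    omega
  -- the permutation fact for A ++ B
  have hABperm : (A ++ B).Perm (List.range' 1 (A.length + B.length)) := by
    have h0 : (A ++ (m :: B)).Perm (List.range' 1 n) := hdec ▸ hperm
    have h1 : ((A ++ B) ++ [m]).Perm (A ++ (m :: B)) := by
      rw [List.append_assoc]
      refine (List.Perm.refl A).append ?_
      exact List.perm_append_comm
    have h2 : List.range' 1 n = List.range' 1 (A.length + B.length) ++ [n] := by
      have h3 := range'_split 1 (A.length + B.length) 1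
      rw [List.range'_one] at h3
      have h6 : n = A.length + B.length + 1 := by omega
      rw [h6, h3]
      congr 2
      omega
    rw [hmn] at h1 h0
    have h4 := (h1.trans h0)
    rw [h2] at h4
    exact (List.perm_append_right_iff [n]).mp h4
  have hndAB : (A ++ B).Nodup := hABperm.nodup_iff.mpr List.nodup_range'
  obtain ⟨hndA, hndB, hdisj⟩ := List.nodup_append'.mp hndAB
  have hSx : S (x :: t) = S A ++ S B ++ [n] := by
    have hs := S_cons x t
    rw [← hm, ← hAdef, ← hBdef] at hs
    rw [hs, hmn]
  have no231 : ∀ {a b c : ℕ}, [b, c, a] <+ S (x :: t) → a < b → b < c → False := by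
    intro a b c hsub h1 h2
    exact no_pattern hSS hsub h1 h2
  by_cases hex : ∃ y ∈ A, ∃ z ∈ B, z < y
  · -- Case C2
    right
    obtain ⟨y0, hy0, z0, hz0, hzy0⟩ := hex
    obtain ⟨a0, A', hA'⟩ : ∃ a0 A', A = a0 :: A' := by
      cases hc : A with
      | nil => rw [hc] at hy0; simp at hy0
      | cons a0 A' => exact ⟨a0, A', rfl⟩
    set v := A'.foldr max a0 with hv
    have hvA : v ∈ A := by rw [hA']; exact foldr_max_mem a0 A'
    have hvub : ∀ y ∈ A, y ≤ v := by rw [hA']; exact le_foldr_max a0 A'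
    have hSA : S A = (S (A.takeWhile (· ≠ v)) ++ S ((A.dropWhile (· ≠ v)).tail)) ++ [v] := by
      rw [hA']
      have hs := S_cons a0 A'
      rw [← hv] at hs
      exact hs
    have hyv_sub : ∀ y ∈ S A, y ≠ v → [y, v] <+ S A := by
      intro y hy hyv
      rw [hSA] at hy ⊢
      rcases List.mem_append.mp hy with h1 | h1
      · exact (List.singleton_sublist.mpr h1).append (List.Sublist.refl [v])
      · simp at h1; exact absurd h1 hyv
    -- Fact A
    have hsep : ∀ y ∈ A, y ≠ v → ∀ z ∈ B, y < z := by
      intro y hy hyv z hz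
      by_contra hcon
      have hzy : z < y := by
        rcases Nat.lt_or_ge z y with h1 | h1
        · exact h1
        · have : y ≠ z := fun he => hdisj hy (he ▸ hz)
          omega
      have hpat : [y, v, z] <+ S (x :: t) := by
        rw [hSx]
        have h1 : [y, v] <+ S A := hyv_sub y (S_mem.mpr hy) hyv
        have h2 : [z] <+ S B := List.singleton_sublist.mpr (S_mem.mpr hz)
        exact (h1.append h2).trans (List.sublist_append_left _ _)
      have hyltv : y < v := lt_of_le_of_ne (hvub y hy) hyv
      exact no231 hpat hzy hyltv
    have hexv : ∃ z ∈ B, z < v := ⟨z0, hz0, lt_of_lt_of_le hzy0 (hvub y0 hy0)⟩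
    obtain ⟨hvk, hvkl, hApm, hBpm⟩ :=
      count_case2 rfl rfl hABperm hvA hvub hsep hexv
    have hk1 : 1 ≤ A.length := by rw [hA']; simp
    have hsA : shift3 0 A.length (v - A.length) (stand A) = A := recon_case2A hvk hApm
    have hsB : shift3 (A.length - 1) ((v - A.length) + 1) A.length (stand B) = B :=
      recon_case2B hk1 hvk hvkl hBpm
    set f2 : ℕ → ℕ := fun y =>
      if y < (v - A.length) + 1 then y + (A.length - 1) else y + A.length with hf2def
    have hf2 : StrictMono f2 := by
      intro y1 y2 h12
      simp only [hf2def]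
      split_ifs <;> omega
    have hBmap : B = (stand B).map f2 := by
      rw [show (stand B).map f2
        = shift3 (A.length - 1) ((v - A.length) + 1) A.length (stand B) from rfl, hsB]
    have hwB : (v - 1) ∈ B := by
      apply hBpm.mem_iff.mpr
      exact List.mem_append.mpr (Or.inl (List.mem_range'_1.mpr ⟨by omega, by omega⟩))
    have hwSB : (v - 1) ∈ S B := S_mem.mpr hwB
    set q := (S B).idxOf (v - 1) with hq_def
    have hq : q < (S B).length := List.idxOf_lt_length_iff.mpr hwSB
    have hgd : (S B).getD q 0 = v - 1 := by
      rw [List.getD_eq_getElem _ _ hq]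
      exact List.getElem_idxOf hq
    have hvnotB : v ∉ B := fun hvB => hdisj hvA hvB
    have hall : ∀ u ∈ (S B).take q, u < (S B).getD q 0 := by
      intro u hu
      rw [hgd]
      have huSB : u ∈ S B := List.mem_of_mem_take hu
      have huB : u ∈ B := S_mem.mp huSB
      have hune : u ≠ v - 1 := by
        intro he
        rw [he, hq_def] at hu
        exact not_mem_take_indexOf (S B) (v - 1) hu
      by_contra hcon
      have hult : v < u := by
        have : u ≠ v := fun he => hvnotB (he ▸ huB)
        omega
      have hpat : [v, u, v - 1] <+ S (x :: t) := by
        rw [hSx]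
        have h1 : [v] <+ S A := List.singleton_sublist.mpr (S_mem.mpr hvA)
        have h2 : [u, v - 1] <+ S B := by
          conv_rhs => rw [← List.take_append_drop q (S B)]
          refine (List.singleton_sublist.mpr hu).append ?_
          rw [List.drop_eq_getElem_cons hq]
          have hgq : (S B)[q] = v - 1 := List.getElem_idxOf hq
          rw [hgq]
          exact List.singleton_sublist.mpr (List.mem_cons_self)
        exact (h1.append h2).trans (List.sublist_append_left _ _)
      exact no231 hpat (by omega) hult
    have hwlr : (v - 1) ∈ lrMaxima (S B) := by
      have := mem_lrMaxima_of hq hall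
      rwa [hgd] at this
    have hlrm_map : lrMaxima (S B) = List.map f2 (lrMaxima (S (stand B))) := by
      conv_lhs => rw [hBmap]
      rw [S_map hf2, lrMaxima_map hf2]
    have hfa : f2 (v - A.length) = v - 1 := by
      simp only [hf2def]
      rw [if_pos (by omega)]
      omega
    have halr : (v - A.length) ∈ lrMaxima (S (stand B)) := by
      rw [hlrm_map] at hwlr
      obtain ⟨b, hb, hfb⟩ := List.mem_map.mp hwlr
      have hba : b = v - A.length := hf2.injective (by rw [hfb, hfa])
      rwa [← hba]
    have hidx : (lrMaxima (S (stand B))).idxOf (v - A.length)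
        < (lrMaxima (S (stand B))).length := List.idxOf_lt_length_iff.mpr halr
    refine ⟨(lrMaxima (S (stand B))).idxOf (v - A.length) + 1, by omega, ?_, ?_⟩
    · rw [slmax, hπ2, lmax_eq_length_lrMaxima]
      omega
    · have hlrm_val : lrm π2 ((lrMaxima (S (stand B))).idxOf (v - A.length) + 1)
          = v - A.length := by
        rw [lrm, hπ2]
        simp only [Nat.add_sub_cancel]
        rw [List.getD_eq_getElem _ _ hidx]
        exact List.getElem_idxOf hidx
      rw [C2, hlrm_val, hπ1, hπ2, stand_length, stand_length, hsA, hsB]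
      conv_lhs => rw [hdec]
      rw [hmn]
      have hne : n = A.length + B.length + 1 := by omega
      rw [hne]
  · -- Case C1
    left
    push_neg at hex
    have hsep : ∀ y ∈ A, ∀ z ∈ B, y < z := by
      intro y hy z hz
      have h1 := hex y hy z hz
      have : y ≠ z := fun he => hdisj hy (he ▸ hz)
      omega
    obtain ⟨hApm, hBpm⟩ := count_case1 rfl rfl hABperm hsep
    have hsA : stand A = A := recon_case1A hApm
    have hsB : shift A.length (stand B) = B := recon_case1B hBpm
    rw [C1, hπ1, hπ2, stand_length, stand_length, hsA, hsB]
    rw [hdec, hmn]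
    congr 2
    omega


end TSP
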